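/- arXiv:math/0602561 — 2 statements merged into one kernel-verified Lean document; each statement's English description precedes it below -/
import Mathlib

section
/- For a multihomomorphism σ from C_{2r+1} to K_n of dimension n−3 with σ(v−1) ∪ σ(v+1) = [n−1] (so σ ∈ B_v), we have |σ(v−1)| + |σ(v+1)| = n − 1, σ(w) is a singleton for every w ∉ {v−1, v+1}, and σ(v) = {n}. -/
/-- A multihomomorphism from the cycle `C_{2r+1}` to the complete graph `K_n` on `[n]`. -/
def Multihom (r n : ℕ) (σ : ZMod (2*r+1) → Finset ℕ) : Prop :=
  (∀ v, (σ v).Nonempty ∧ σ v ⊆ Finset.Icc 1 n) ∧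
  ∀ u v : ZMod (2*r+1), u - v = 1 → Disjoint (σ u) (σ v)

/-- The dimension of a multihomomorphism: `∑_v (|σ(v)| - 1)`. -/
def mdim (r : ℕ) (σ : ZMod (2*r+1) → Finset ℕ) : ℕ :=
  ∑ v : ZMod (2*r+1), ((σ v).card - 1)

theorem structure_of_B_cell (r n : ℕ) (hr : 1 ≤ r) (hn : 4 ≤ n)
    (σ : ZMod (2*r+1) → Finset ℕ) (hσ : Multihom r n σ)
    (v : ZMod (2*r+1)) (hdim : mdim r σ = n - 3)
    (hv : σ (v - 1) ∪ σ (v + 1) = Finset.Icc 1 (n-1)) :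
    (σ (v - 1)).card + (σ (v + 1)).card = n - 1 ∧
    (∀ w : ZMod (2*r+1), w ≠ v - 1 → w ≠ v + 1 → (σ w).card = 1) ∧
    σ v = {n} := by
  obtain ⟨hne, hdisj⟩ := hσ
  have hm3 : 3 ≤ 2*r+1 := by omega
  have hvne : (v - 1 : ZMod (2*r+1)) ≠ v + 1 := by
    intro h
    have h2 : ((2 : ℕ) : ZMod (2*r+1)) = 0 := by
      push_cast
      linear_combination -h
    rw [ZMod.natCast_eq_zero_iff] at h2
    have := Nat.le_of_dvd (by norm_num) h2
    omega
  set A := σ (v-1) with hA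
  set B := σ (v+1) with hB
  have hcA : 1 ≤ A.card := Finset.card_pos.mpr (hne (v-1)).1
  have hcB : 1 ≤ B.card := Finset.card_pos.mpr (hne (v+1)).1
  have hu : (A ∪ B).card = n - 1 := by
    rw [hv, Nat.card_Icc]; omega
  have hAB : n - 1 ≤ A.card + B.card := by
    rw [← hu]; exact Finset.card_union_le A B
  -- split the dimension sum
  set T : Finset (ZMod (2*r+1)) := {v-1, v+1} with hT
  have hsplit : mdim r σ =
      (A.card - 1) + (B.card - 1) + ∑ w ∈ Tᶜ, ((σ w).card - 1) := by
    rw [mdim, ← Finset.sum_add_sum_compl T (fun w => (σ w).card - 1)]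
    congr 1
    rw [hT, Finset.sum_pair hvne]
  have hS : ∑ w ∈ Tᶜ, ((σ w).card - 1) = 0 ∧ A.card + B.card = n - 1 := by
    constructor <;> omega
  refine ⟨hS.2, ?_, ?_⟩
  · intro w hw1 hw2
    have hwT : w ∈ Tᶜ := by
      simp [hT, hw1, hw2]
    have := (Finset.sum_eq_zero_iff.mp hS.1) w hwT
    have hcw : 1 ≤ (σ w).card := Finset.card_pos.mpr (hne w).1
    omega
  · have d1 : Disjoint (σ v) A := by
      apply hdisj
      ring
    have d2 : Disjoint (σ v) B := by
      apply (hdisj (v+1) v _).symm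
      ring
    have hsub : σ v ⊆ {n} := by
      intro x hx
      have hx1 : x ∈ Finset.Icc 1 n := (hne v).2 hx
      have hx2 : x ∉ Finset.Icc 1 (n-1) := by
        rw [← hv]
        simp only [Finset.mem_union]
        push_neg
        exact ⟨Finset.disjoint_left.mp d1 hx, Finset.disjoint_left.mp d2 hx⟩
      simp only [Finset.mem_Icc] at hx1 hx2
      simp only [Finset.mem_singleton]
      omega
    have := (hne v).1
    obtain ⟨x, hx⟩ := this
    have hxn := hsub hx
    simp only [Finset.mem_singleton] at hxn
    subst hxn
    apply Finset.Subset.antisymm hsub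
    intro y hy
    simp only [Finset.mem_singleton] at hy
    subst hy
    exact hx
end

section
/- The set A_0 of (n−2)-dimensional multihomomorphisms σ from C_{2r+1} to K_n with σ(0) = [n−1] is γ-invariant and γ acts on it without fixed points (for r ≥ 1, n ≥ 3); consequently the image of A_0 in the quotient by γ, counted with Z/2 multiplicities (each orbit counted twice), is the zero Z/2-chain. -/
/-- Membership in `A_0`: a multihomomorphism of dimension `n-2` with value `[n-1]` at `0`. -/
def InA0 (r n : ℕ) (τ : ZMod (2*r+1) → Finset ℕ) : Prop :=
  Multihom r n τ ∧ mdim r τ = n - 2 ∧ τ 0 = Finset.Icc 1 (n-1)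

lemma inA0_neg {r n : ℕ} {σ : ZMod (2*r+1) → Finset ℕ} (h : InA0 r n σ) :
    InA0 r n (fun v => σ (-v)) := by
  obtain ⟨⟨h1, h2⟩, hd, h0⟩ := h
  refine ⟨⟨fun v => h1 (-v), fun u v huv => ?_⟩, ?_, by simpa using h0⟩
  · exact (h2 (-v) (-u) (by linear_combination huv)).symm
  · rw [← hd]
    exact Equiv.sum_comp (Equiv.neg (ZMod (2*r+1))) (fun v => ((σ v).card - 1))

lemma inA0_neg_iff {r n : ℕ} (σ : ZMod (2*r+1) → Finset ℕ) :
    InA0 r n σ ↔ InA0 r n (fun v => σ (-v)) := by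
  constructor
  · exact inA0_neg
  · intro h
    have := inA0_neg h
    simpa using this

lemma inA0_free {r n : ℕ} {σ : ZMod (2*r+1) → Finset ℕ} (h : InA0 r n σ) :
    (fun v => σ (-v)) ≠ σ := by
  intro hfix
  obtain ⟨⟨h1, h2⟩, _, _⟩ := h
  have hfix' : ∀ v, σ (-v) = σ v := fun v => congrFun hfix v
  have hz : ((r : ZMod (2*r+1)) + 1) + (r : ZMod (2*r+1)) = 0 := by
    have : ((2*r+1 : ℕ) : ZMod (2*r+1)) = 0 := ZMod.natCast_self _
    push_cast at this
    linear_combination this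
  have hneg : -((r : ZMod (2*r+1)) + 1) = (r : ZMod (2*r+1)) := by
    linear_combination -hz
  have hd : Disjoint (σ ((r : ZMod (2*r+1)) + 1)) (σ (r : ZMod (2*r+1))) :=
    h2 _ _ (by ring)
  have heq : σ ((r : ZMod (2*r+1)) + 1) = σ (r : ZMod (2*r+1)) := by
    rw [← hfix' ((r : ZMod (2*r+1)) + 1), hneg]
  rw [heq] at hd
  exact (h1 (r : ZMod (2*r+1))).1.ne_empty (Disjoint.eq_bot_of_self hd)

theorem A_zero_invariant_free_and_pushforward_zero (r n : ℕ) (hr : 1 ≤ r) (hn : 3 ≤ n) :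
    (∀ σ : ZMod (2*r+1) → Finset ℕ, InA0 r n σ ↔ InA0 r n (fun v => σ (-v))) ∧
    (∀ σ : ZMod (2*r+1) → Finset ℕ, InA0 r n σ → (fun v => σ (-v)) ≠ σ) ∧
    (∀ τ : ZMod (2*r+1) → Finset ℕ,
      Even (Set.ncard {σ : ZMod (2*r+1) → Finset ℕ |
        InA0 r n σ ∧ (σ = τ ∨ σ = fun v => τ (-v))})) := by
  refine ⟨fun σ => inA0_neg_iff σ, fun σ h => inA0_free h, fun τ => ?_⟩
  by_cases hτ : InA0 r n τ
  · have hτ' : InA0 r n (fun v => τ (-v)) := inA0_neg hτ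
    have hne : τ ≠ (fun v => τ (-v)) := fun h => inA0_free hτ h.symm
    have hset : {σ : ZMod (2*r+1) → Finset ℕ |
        InA0 r n σ ∧ (σ = τ ∨ σ = fun v => τ (-v))} = {τ, fun v => τ (-v)} := by
      ext σ
      simp only [Set.mem_setOf_eq, Set.mem_insert_iff, Set.mem_singleton_iff]
      constructor
      · exact fun h => h.2
      · rintro (rfl | rfl)
        · exact ⟨hτ, Or.inl rfl⟩
        · exact ⟨hτ', Or.inr rfl⟩
    rw [hset, Set.ncard_pair hne]
    exact ⟨1, rfl⟩
  · have hset : {σ : ZMod (2*r+1) → Finset ℕ |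
        InA0 r n σ ∧ (σ = τ ∨ σ = fun v => τ (-v))} = ∅ := by
      ext σ
      simp only [Set.mem_setOf_eq, Set.mem_empty_iff_false, iff_false]
      rintro ⟨hσ, rfl | rfl⟩
      · exact hτ hσ
      · exact hτ ((inA0_neg_iff τ).mpr hσ)
    rw [hset, Set.ncard_empty]
    exact Even.zero
end
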